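/- Lemma 2: for any bipartite density matrix ψ^{AB}, P(X^A|BA')_{ψ_Z} ≥ P(X^A|B)_ψ, where ψ_Z = U_Z ψ U_Z† is the state after coherently copying the Z basis of A to A'. -/

import Mathlib

open Matrix Kronecker Complex BigOperators
open scoped ComplexOrder Classical

noncomputable section

/-- primitive d-th root of unity -/
def omg (d : ℕ) : ℂ := Complex.exp (2 * Real.pi * Complex.I / d)

/-- standard basis vector |z⟩ -/
def ketZ (d : ℕ) (z : Fin d) : Fin d → ℂ := fun i => if i = z then 1 else 0

/-- Fourier basis vector |x̃⟩ = (1/√d) Σ_z ω^{xz} |z⟩ -/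
def ketX (d : ℕ) (x : Fin d) : Fin d → ℂ :=
  fun z => ((1 / Real.sqrt d : ℝ) : ℂ) * omg d ^ ((x : ℕ) * (z : ℕ))

/-- projector |z⟩⟨z| -/
def projZ (d : ℕ) (z : Fin d) : Matrix (Fin d) (Fin d) ℂ :=
  Matrix.vecMulVec (ketZ d z) (star (ketZ d z))

/-- projector |x̃⟩⟨x̃| -/
def projX (d : ℕ) (x : Fin d) : Matrix (Fin d) (Fin d) ℂ :=
  Matrix.vecMulVec (ketX d x) (star (ketX d x))

/-- positive semidefinite square root (0 if not PSD) -/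
def msqrt {n : Type*} [Fintype n] [DecidableEq n] (M : Matrix n n ℂ) : Matrix n n ℂ :=
  if h : M.PosSemidef then (h.1.eigenvectorUnitary : Matrix n n ℂ) *
    Matrix.diagonal ((↑) ∘ Real.sqrt ∘ h.1.eigenvalues) * (star h.1.eigenvectorUnitary : Matrix n n ℂ)
    else 0

/-- trace norm ‖M‖₁ = Tr √(MᴴM) -/
def trNorm {n : Type*} [Fintype n] [DecidableEq n] (M : Matrix n n ℂ) : ℝ :=
  (msqrt (Mᴴ * M)).trace.re

/-- fidelity F(ρ,σ) = ‖√ρ√σ‖₁ -/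
def Fid {n : Type*} [Fintype n] [DecidableEq n] (ρ σ : Matrix n n ℂ) : ℝ :=
  trNorm (msqrt ρ * msqrt σ)

/-- a POVM with d outcomes -/
def IsPOVM {n : Type*} [Fintype n] [DecidableEq n] {d : ℕ} (Λ : Fin d → Matrix n n ℂ) : Prop :=
  (∀ z, (Λ z).PosSemidef) ∧ ∑ z, Λ z = 1

/-- optimal guessing probability of the measurement with rank-one elements P z on A,
given the B part of the bipartite state ψ -/
def Pguess {d : ℕ} {β : Type*} [Fintype β] [DecidableEq β]
    (P : Fin d → Matrix (Fin d) (Fin d) ℂ) (ψ : Matrix (Fin d × β) (Fin d × β) ℂ) : ℝ :=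
  sSup { r | ∃ Λ : Fin d → Matrix β β ℂ, IsPOVM Λ ∧
    r = (Matrix.trace ((∑ z, P z ⊗ₖ Λ z) * ψ)).re }

/-- the coherent copy isometry U_Z : |z⟩ ↦ |z⟩_A ⊗ |z⟩_{A'} -/
def UZmat (d : ℕ) : Matrix (Fin d × Fin d) (Fin d) ℂ :=
  fun p z => if p.1 = z ∧ p.2 = z then 1 else 0

/-- the maximally entangled vector |Φ⟩ = (1/√d) Σ_z |z⟩|z⟩ -/
def maxEnt (d : ℕ) : Fin d × Fin d → ℂ :=
  fun p => if p.1 = p.2 then ((1 / Real.sqrt d : ℝ) : ℂ) else 0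

/-- F(A|B)_ψ: the best entanglement fidelity achievable by a quantum channel
(given by its Kraus operators) acting on B alone; since Φ is pure,
F(Φ, ρ)² = ⟨Φ|ρ|Φ⟩. -/
def Fent {d : ℕ} {β : Type*} [Fintype β] [DecidableEq β]
    (ψ : Matrix (Fin d × β) (Fin d × β) ℂ) : ℝ :=
  sSup { r | ∃ (m : ℕ) (K : Fin m → Matrix (Fin d) β ℂ),
    (∑ i, (K i)ᴴ * K i = 1) ∧
    r = Real.sqrt ((star (maxEnt d) ⬝ᵥ
      ((∑ i, ((1 : Matrix (Fin d) (Fin d) ℂ) ⊗ₖ K i) * ψ *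
        ((1 : Matrix (Fin d) (Fin d) ℂ) ⊗ₖ K i)ᴴ).mulVec (maxEnt d))).re) }

/-- the state ψ_Z = U_Z ψ U_Z†, reindexed so that A is the first factor and
A' is appended to Bob's system. -/
def psiZ {d : ℕ} {β : Type*} [Fintype β] [DecidableEq β]
    (ψ : Matrix (Fin d × β) (Fin d × β) ℂ) :
    Matrix (Fin d × Fin d × β) (Fin d × Fin d × β) ℂ :=
  Matrix.submatrix
    ((UZmat d ⊗ₖ (1 : Matrix β β ℂ)) * ψ * (UZmat d ⊗ₖ (1 : Matrix β β ℂ))ᴴ)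
    (fun p => ((p.1, p.2.1), p.2.2)) (fun p => ((p.1, p.2.1), p.2.2))

section Aux
variable {d : ℕ} [NeZero d]

lemma omg_pow_d (d : ℕ) [NeZero d] : omg d ^ d = 1 := by
  rw [omg, ← Complex.exp_nat_mul, mul_div_cancel₀]
  · exact Complex.exp_two_pi_mul_I
  · exact_mod_cast Nat.cast_ne_zero.mpr (NeZero.ne d)

lemma omg_pow_mod (d : ℕ) [NeZero d] (n : ℕ) : omg d ^ n = omg d ^ (n % d) := by
  conv_lhs => rw [← Nat.mod_add_div n d, pow_add, pow_mul, omg_pow_d, one_pow, mul_one]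

lemma conj_omg_mul_self (d : ℕ) (m : ℕ) :
    (starRingEnd ℂ) (omg d ^ m) * omg d ^ m = 1 := by
  rw [map_pow, ← mul_pow]
  have : (starRingEnd ℂ) (omg d) * omg d = 1 := by
    rw [omg, ← Complex.exp_conj, ← Complex.exp_add]
    have : (starRingEnd ℂ) (2 * ↑Real.pi * Complex.I / ↑d) = -(2 * ↑Real.pi * Complex.I / ↑d) := by
      simp only [map_div₀, _root_.map_mul, Complex.conj_I, Complex.conj_ofReal, map_ofNat,
        Complex.conj_natCast]
      ring
    rw [this, neg_add_cancel, Complex.exp_zero]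
  rw [this, one_pow]

lemma csq (d : ℕ) [NeZero d] :
    (((1 / Real.sqrt d : ℝ) : ℂ)) * (((1 / Real.sqrt d : ℝ) : ℂ)) = (d : ℂ)⁻¹ := by
  rw [← Complex.ofReal_mul]
  rw [div_mul_div_comm, Real.mul_self_sqrt (by positivity)]
  push_cast
  rw [one_mul, one_div]


lemma omg_add_pow (x y a : Fin d) :
    omg d ^ ((x : ℕ) * a) * omg d ^ ((y : ℕ) * a) = omg d ^ (((x + y : Fin d) : ℕ) * a) := by
  rw [← pow_add, omg_pow_mod d ((x : ℕ) * a + (y : ℕ) * a),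
    omg_pow_mod d (((x + y : Fin d) : ℕ) * a)]
  congr 1
  rw [Fin.val_add, Nat.mod_mul_mod, ← add_mul]

omit [NeZero d] in
lemma projX_apply (x a a' : Fin d) :
    projX d x a a' = ketX d x a * (starRingEnd ℂ) (ketX d x a') := rfl

lemma projX_mul_entry (x y a a' : Fin d) :
    projX d x a a' * projX d y a a' = (d : ℂ)⁻¹ * projX d (x + y) a a' := by
  simp only [projX_apply, ketX, _root_.map_mul, map_pow, Complex.conj_ofReal]
  have h1 := omg_add_pow x y a
  have h2 : (starRingEnd ℂ) (omg d) ^ ((x : ℕ) * a') * (starRingEnd ℂ) (omg d) ^ ((y : ℕ) * a')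
      = (starRingEnd ℂ) (omg d) ^ (((x + y : Fin d) : ℕ) * a') := by
    have := congrArg (starRingEnd ℂ) (omg_add_pow x y a')
    simpa only [_root_.map_mul, map_pow] using this
  have hc := csq d
  set c : ℂ := (((1 / Real.sqrt d : ℝ) : ℂ)) with hcdef
  linear_combination (c^4 * ((starRingEnd ℂ) (omg d) ^ ((x : ℕ) * a') *
      (starRingEnd ℂ) (omg d) ^ ((y : ℕ) * a'))) * h1
    + (c^4 * omg d ^ (((x + y : Fin d) : ℕ) * a)) * h2
    + (c^2 * omg d ^ (((x + y : Fin d) : ℕ) * a) *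
        (starRingEnd ℂ) (omg d) ^ (((x + y : Fin d) : ℕ) * a')) * hc

lemma geom_fin (w : ℂ) (hw : w ^ d = 1) :
    ∑ x : Fin d, w ^ (x : ℕ) = if w = 1 then (d : ℂ) else 0 := by
  rw [Fin.sum_univ_eq_sum_range]
  split_ifs with h
  · simp [h]
  · rw [geom_sum_eq h, hw, sub_self, zero_div]

lemma conj_omg (n : ℕ) : (starRingEnd ℂ) (omg d) ^ n = omg d ^ ((d - 1) * n) := by
  have hz : omg d ≠ 0 := Complex.exp_ne_zero _
  have h1 : (starRingEnd ℂ) (omg d) * omg d = 1 := by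
    simpa using conj_omg_mul_self d 1
  have hd : d - 1 + 1 = d := Nat.succ_pred_eq_of_pos (Nat.pos_of_ne_zero (NeZero.ne d))
  have key : (starRingEnd ℂ) (omg d) = omg d ^ (d - 1) := by
    apply mul_right_cancel₀ hz
    rw [h1, ← pow_succ, hd, omg_pow_d]
  rw [key, ← pow_mul]

lemma sum_projX : ∑ x : Fin d, projX d x = 1 := by
  ext a a'
  have hprim : IsPrimitiveRoot (omg d) d := Complex.isPrimitiveRoot_exp d (NeZero.ne d)
  simp only [Matrix.sum_apply, projX_apply, ketX, _root_.map_mul, map_pow, Complex.conj_ofReal]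
  have key : ∀ x : Fin d,
      ((1 / Real.sqrt d : ℝ) : ℂ) * omg d ^ ((x : ℕ) * a) *
        (((1 / Real.sqrt d : ℝ) : ℂ) * (starRingEnd ℂ) (omg d) ^ ((x : ℕ) * a'))
      = (d : ℂ)⁻¹ * (omg d ^ ((a : ℕ) + (d - 1) * a')) ^ (x : ℕ) := by
    intro x
    rw [conj_omg, ← pow_mul]
    have hpow : omg d ^ ((x : ℕ) * a) * omg d ^ ((d - 1) * ((x : ℕ) * a'))
        = omg d ^ (((a : ℕ) + (d - 1) * a') * (x : ℕ)) := by
      rw [← pow_add]; congr 1; ring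
    have hc := csq d
    linear_combination ((d : ℂ)⁻¹) * hpow
      + (omg d ^ ((x : ℕ) * a) * omg d ^ ((d - 1) * ((x : ℕ) * a'))) * hc
  rw [Finset.sum_congr rfl (fun x _ => key x), ← Finset.mul_sum]
  have hw : (omg d ^ ((a : ℕ) + (d - 1) * a')) ^ d = 1 := by
    rw [← pow_mul, mul_comm, pow_mul, omg_pow_d, one_pow]
  rw [geom_fin _ hw]
  have hd1 : ((d - 1 : ℕ) : ZMod d) = -1 := by
    have h0 : ((d - 1 : ℕ) : ZMod d) + 1 = 0 := by
      have hd : d - 1 + 1 = d := Nat.succ_pred_eq_of_pos (Nat.pos_of_ne_zero (NeZero.ne d))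
      rw [show ((1 : ZMod d)) = ((1 : ℕ) : ZMod d) by push_cast; ring, ← Nat.cast_add, hd,
        ZMod.natCast_self]
    exact eq_neg_of_add_eq_zero_left h0
  have hiff : omg d ^ ((a : ℕ) + (d - 1) * a') = 1 ↔ a = a' := by
    rw [hprim.pow_eq_one_iff_dvd, ← ZMod.natCast_eq_zero_iff]
    push_cast
    rw [hd1]
    constructor
    · intro h
      have h2 : ((a : ℕ) : ZMod d) = ((a' : ℕ) : ZMod d) := by linear_combination h
      rw [ZMod.natCast_eq_natCast_iff] at h2
      exact Fin.ext ((Nat.mod_eq_of_lt a.isLt) ▸ (Nat.mod_eq_of_lt a'.isLt) ▸ h2)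
    · rintro rfl; ring
  split_ifs with h
  · rw [hiff] at h
    simp [h, Matrix.one_apply, inv_mul_cancel₀ (show (d:ℂ) ≠ 0 by exact_mod_cast NeZero.ne d)]
  · rw [hiff] at h
    simp [Matrix.one_apply, Ne.symm, h]

omit [NeZero d] in
lemma projX_conjTranspose (x : Fin d) : (projX d x)ᴴ = projX d x := by
  ext a a'
  simp [conjTranspose_apply, projX_apply, StarMul.star_mul, Complex.star_def, mul_comm]

lemma ketX_norm (x : Fin d) : ∑ k : Fin d, (starRingEnd ℂ) (ketX d x k) * ketX d x k = 1 := by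
  have : ∀ k : Fin d, (starRingEnd ℂ) (ketX d x k) * ketX d x k = (d : ℂ)⁻¹ := by
    intro k
    simp only [ketX, _root_.map_mul, Complex.conj_ofReal]
    have h1 := conj_omg_mul_self d ((x : ℕ) * k)
    have hc := csq d
    linear_combination ((1 / Real.sqrt d : ℝ) : ℂ) * ((1 / Real.sqrt d : ℝ) : ℂ) * h1 + hc
  rw [Finset.sum_congr rfl (fun k _ => this k)]
  simp [Finset.card_univ, inv_mul_cancel₀ (show (d:ℂ) ≠ 0 by exact_mod_cast NeZero.ne d)]

lemma projX_idem (x : Fin d) : projX d x * projX d x = projX d x := by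
  ext a a'
  simp only [Matrix.mul_apply, projX_apply]
  have : ∀ k : Fin d, ketX d x a * (starRingEnd ℂ) (ketX d x k) *
      (ketX d x k * (starRingEnd ℂ) (ketX d x a'))
      = (ketX d x a * (starRingEnd ℂ) (ketX d x a')) *
        ((starRingEnd ℂ) (ketX d x k) * ketX d x k) := by intro k; ring
  rw [Finset.sum_congr rfl (fun k _ => this k), ← Finset.mul_sum, ketX_norm, mul_one]

lemma one_sub_projX_posSemidef (x : Fin d) : (1 - projX d x).PosSemidef := by
  have h : (1 - projX d x) = (1 - projX d x)ᴴ * (1 - projX d x) := by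
    simp only [conjTranspose_sub, conjTranspose_one, projX_conjTranspose, Matrix.mul_sub,
      Matrix.sub_mul, Matrix.mul_one, Matrix.one_mul, projX_idem]
    abel
  rw [h]
  exact Matrix.posSemidef_conjTranspose_mul_self _

lemma kron_conjTranspose {m n p q : Type*} (A : Matrix m n ℂ) (B : Matrix p q ℂ) :
    (A ⊗ₖ B)ᴴ = Aᴴ ⊗ₖ Bᴴ := by
  ext ⟨a,b⟩ ⟨c,e⟩
  simp [conjTranspose_apply, mul_comm]

lemma psd_exists_ct_mul_self {n : Type*} [Fintype n] [DecidableEq n] {A : Matrix n n ℂ}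
    (hA : A.PosSemidef) : ∃ C : Matrix n n ℂ, A = Cᴴ * C := by
  open scoped MatrixOrder Matrix.Norms.L2Operator in
  obtain ⟨B, rfl⟩ := CStarAlgebra.nonneg_iff_eq_star_mul_self.mp hA.nonneg
  exact ⟨B, rfl⟩

lemma kron_posSemidef {m p : Type*} [Fintype m] [DecidableEq m] [Fintype p] [DecidableEq p]
    {A : Matrix m m ℂ} {B : Matrix p p ℂ} (hA : A.PosSemidef) (hB : B.PosSemidef) :
    (A ⊗ₖ B).PosSemidef := by
  obtain ⟨C, hC⟩ := psd_exists_ct_mul_self hA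
  obtain ⟨D, hD⟩ := psd_exists_ct_mul_self hB
  rw [hC, hD, Matrix.mul_kronecker_mul, ← kron_conjTranspose]
  exact Matrix.posSemidef_conjTranspose_mul_self _

end Aux
section T5
variable {d : ℕ} [NeZero d] {β : Type*} [Fintype β] [DecidableEq β]

omit [NeZero d] in
lemma UZone_apply (a c z : Fin d) (b b₂ : β) :
    (UZmat d ⊗ₖ (1 : Matrix β β ℂ)) ((a, c), b) (z, b₂)
      = if a = z ∧ c = z ∧ b = b₂ then 1 else 0 := by
  simp only [kroneckerMap_apply, UZmat, Matrix.one_apply]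
  split_ifs <;> simp_all

omit [NeZero d] in
lemma UZone_mul_apply (ψ : Matrix (Fin d × β) (Fin d × β) ℂ) (a c : Fin d) (b : β)
    (s : Fin d × β) :
    ((UZmat d ⊗ₖ (1 : Matrix β β ℂ)) * ψ) ((a, c), b) s
      = if a = c then ψ (a, b) s else 0 := by
  rw [Matrix.mul_apply, Fintype.sum_prod_type]
  simp only [UZone_apply, ite_and, ite_mul, one_mul, zero_mul]
  rw [Finset.sum_comm]
  simp [Finset.sum_ite_eq, Finset.sum_ite_eq', eq_comm]

omit [NeZero d] in
lemma psiZ_apply' (ψ : Matrix (Fin d × β) (Fin d × β) ℂ) (a c a' c' : Fin d) (b b' : β) :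
    psiZ ψ (a, c, b) (a', c', b')
      = if a = c ∧ a' = c' then ψ (a, b) (a', b') else 0 := by
  show ((UZmat d ⊗ₖ (1 : Matrix β β ℂ)) * ψ * (UZmat d ⊗ₖ (1 : Matrix β β ℂ))ᴴ)
      ((a, c), b) ((a', c'), b') = _
  rw [Matrix.mul_apply]
  have : ∀ s : Fin d × β,
      ((UZmat d ⊗ₖ (1 : Matrix β β ℂ)) * ψ) ((a, c), b) s *
        (UZmat d ⊗ₖ (1 : Matrix β β ℂ))ᴴ s ((a', c'), b')
      = if a = c then (if a' = c' then (if s = (a', b') then ψ (a, b) s else 0) else 0) else 0 := by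
    intro s
    rw [UZone_mul_apply, Matrix.conjTranspose_apply, UZone_apply]
    split_ifs <;> simp_all
  rw [Finset.sum_congr rfl fun s _ => this s]
  by_cases h1 : a = c <;> by_cases h2 : a' = c' <;> simp [h1, h2]

/-- the isometry V implementing psiZ -/
def Viso (d : ℕ) (β : Type*) [Fintype β] [DecidableEq β] :
    Matrix (Fin d × Fin d × β) (Fin d × β) ℂ :=
  (UZmat d ⊗ₖ (1 : Matrix β β ℂ)).submatrix
    (fun p : Fin d × Fin d × β => ((p.1, p.2.1), p.2.2)) id

omit [NeZero d] in
lemma Viso_apply (r : Fin d × Fin d × β) (z : Fin d) (b : β) :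
    Viso d β r (z, b) = if r = (z, z, b) then 1 else 0 := by
  obtain ⟨a, c, e⟩ := r
  show (UZmat d ⊗ₖ (1 : Matrix β β ℂ)) ((a, c), e) (z, b) = _
  rw [UZone_apply]
  simp [Prod.ext_iff, and_assoc]

omit [NeZero d] in
lemma psiZ_eq_Viso (ψ : Matrix (Fin d × β) (Fin d × β) ℂ) :
    psiZ ψ = Viso d β * ψ * (Viso d β)ᴴ := rfl

omit [NeZero d] in
lemma Viso_conjTranspose_mul_self : (Viso d β)ᴴ * Viso d β = 1 := by
  ext ⟨z, b⟩ ⟨z', b'⟩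
  rw [Matrix.mul_apply]
  simp only [Matrix.conjTranspose_apply, Viso_apply, apply_ite (star : ℂ → ℂ), star_one,
    star_zero, ite_mul, one_mul, zero_mul, Finset.sum_ite_eq', Finset.mem_univ, if_true]
  have h : ((z, z, b) = ((z', z', b') : Fin d × Fin d × β)) ↔ ((z, b) = ((z', b') : Fin d × β)) := by
    simp only [Prod.ext_iff]; tauto
  simp only [h, Matrix.one_apply]

omit [NeZero d] in
lemma Viso_conj_kron (P Q : Matrix (Fin d) (Fin d) ℂ) (L : Matrix β β ℂ) :
    (Viso d β)ᴴ * (P ⊗ₖ (Q ⊗ₖ L)) * Viso d β = (P ⊙ Q) ⊗ₖ L := by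
  ext ⟨z, b⟩ ⟨z', b'⟩
  rw [Matrix.mul_apply]
  have h1 : ∀ s, ((Viso d β)ᴴ * (P ⊗ₖ (Q ⊗ₖ L))) (z, b) s
      = (P ⊗ₖ (Q ⊗ₖ L)) (z, z, b) s := by
    intro s
    rw [Matrix.mul_apply]
    simp [Matrix.conjTranspose_apply, Viso_apply, apply_ite (star : ℂ → ℂ),
      Finset.sum_ite_eq']
  simp only [h1, Viso_apply, mul_ite, mul_one, mul_zero, Finset.sum_ite_eq']
  simp [Matrix.hadamard_apply, kroneckerMap_apply]
  ring

omit [NeZero d] in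
lemma psiZ_trace (ψ : Matrix (Fin d × β) (Fin d × β) ℂ) : (psiZ ψ).trace = ψ.trace := by
  rw [psiZ_eq_Viso, Matrix.trace_mul_cycle, Viso_conjTranspose_mul_self, Matrix.one_mul]

omit [NeZero d] in
lemma psiZ_posSemidef {ψ : Matrix (Fin d × β) (Fin d × β) ℂ} (hψ : ψ.PosSemidef) :
    (psiZ ψ).PosSemidef := by
  rw [psiZ_eq_Viso]
  exact hψ.mul_mul_conjTranspose_same _

omit [NeZero d] in
lemma key_trace (P Q : Matrix (Fin d) (Fin d) ℂ) (L : Matrix β β ℂ)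
    (ψ : Matrix (Fin d × β) (Fin d × β) ℂ) :
    ((P ⊗ₖ (Q ⊗ₖ L)) * psiZ ψ).trace = (((P ⊙ Q) ⊗ₖ L) * ψ).trace := by
  rw [psiZ_eq_Viso, ← Matrix.mul_assoc, Matrix.trace_mul_cycle, ← Matrix.mul_assoc,
    Viso_conj_kron]

omit [NeZero d] in
lemma kron_sum_right {m : Type*} [Fintype m] {ι : Type*} (s : Finset ι)
    (A : Matrix (Fin d) (Fin d) ℂ) (B : ι → Matrix m m ℂ) :
    ∑ i ∈ s, A ⊗ₖ B i = A ⊗ₖ (∑ i ∈ s, B i) := by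
  ext ⟨a, b⟩ ⟨c, e⟩
  simp [Matrix.sum_apply, Finset.mul_sum]

omit [NeZero d] in
lemma kron_sum_left {m : Type*} [Fintype m] {ι : Type*} (s : Finset ι)
    (A : ι → Matrix (Fin d) (Fin d) ℂ) (B : Matrix m m ℂ) :
    ∑ i ∈ s, A i ⊗ₖ B = (∑ i ∈ s, A i) ⊗ₖ B := by
  ext ⟨a, b⟩ ⟨c, e⟩
  simp [Matrix.sum_apply, Finset.sum_mul]

lemma projX_posSemidef (x : Fin d) : (projX d x).PosSemidef := by
  have : projX d x = (projX d x)ᴴ * projX d x := by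
    rw [projX_conjTranspose, projX_idem]
  rw [this]
  exact Matrix.posSemidef_conjTranspose_mul_self _

omit [NeZero d] in
lemma sum_posSemidef {n : Type*} [Fintype n] {ι : Type*} (s : Finset ι)
    (f : ι → Matrix n n ℂ) (h : ∀ i ∈ s, (f i).PosSemidef) :
    (∑ i ∈ s, f i).PosSemidef := by
  classical
  induction s using Finset.induction_on with
  | empty => simpa using Matrix.PosSemidef.zero
  | insert _ _ hni ih =>
    rw [Finset.sum_insert hni]
    exact (h _ (Finset.mem_insert_self _ _)).add
      (ih fun i hi => h i (Finset.mem_insert_of_mem hi))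

lemma hadamard_projX (x y : Fin d) :
    projX d x ⊙ projX d y = (d : ℂ)⁻¹ • projX d (x + y) := by
  ext a a'
  simp only [Matrix.hadamard_apply, Matrix.smul_apply, smul_eq_mul]
  exact projX_mul_entry x y a a'

lemma sum_shift (g : Fin d → ℂ) (y : Fin d) : ∑ x : Fin d, g (x + y) = ∑ x : Fin d, g x :=
  Fintype.sum_equiv (Equiv.addRight y) _ _ fun x => rfl

end T5

lemma psd_diag_nonneg {n : Type*} [Fintype n] [DecidableEq n] {M : Matrix n n ℂ}
    (hM : M.PosSemidef) (i : n) : 0 ≤ M i i := by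
  exact hM.diag_nonneg

lemma psd_trace_nonneg {n : Type*} [Fintype n] [DecidableEq n] {M : Matrix n n ℂ}
    (hM : M.PosSemidef) : 0 ≤ M.trace :=
  Finset.sum_nonneg fun i _ => psd_diag_nonneg hM i

lemma trace_mul_psd_nonneg {n : Type*} [Fintype n] [DecidableEq n] {A B : Matrix n n ℂ}
    (hA : A.PosSemidef) (hB : B.PosSemidef) : 0 ≤ (A * B).trace := by
  obtain ⟨C, rfl⟩ := psd_exists_ct_mul_self hA
  rw [Matrix.mul_assoc, Matrix.trace_mul_comm]
  exact psd_trace_nonneg (hB.mul_mul_conjTranspose_same C)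


/-- Lemma 2: P(X^A|BA')_{ψ_Z} ≥ P(X^A|B)_ψ. -/
theorem pguessX_psiZ_ge {d : ℕ} [NeZero d] {β : Type*} [Fintype β] [DecidableEq β]
    (ψ : Matrix (Fin d × β) (Fin d × β) ℂ) (hψ : ψ.PosSemidef) (hψ1 : ψ.trace = 1) :
    Pguess (projX d) (psiZ ψ) ≥ Pguess (projX d) ψ := by
  have hψZ := psiZ_posSemidef hψ
  have htr : (psiZ ψ).trace = 1 := by rw [psiZ_trace, hψ1]
  have hbdd : BddAbove {r | ∃ Γ : Fin d → Matrix (Fin d × β) (Fin d × β) ℂ, IsPOVM Γ ∧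
      r = (Matrix.trace ((∑ z, projX d z ⊗ₖ Γ z) * psiZ ψ)).re} := by
    refine ⟨1, ?_⟩
    rintro r ⟨Γ, ⟨hΓpsd, hΓsum⟩, rfl⟩
    set M := ∑ z, projX d z ⊗ₖ Γ z with hM
    have hsub : (1 : Matrix (Fin d × Fin d × β) (Fin d × Fin d × β) ℂ) - M
        = ∑ z, ((1 : Matrix (Fin d) (Fin d) ℂ) - projX d z) ⊗ₖ Γ z := by
      have h1 : ∑ z, ((1 : Matrix (Fin d) (Fin d) ℂ) - projX d z) ⊗ₖ Γ z
          = ∑ z, ((1 : Matrix (Fin d) (Fin d) ℂ) ⊗ₖ Γ z - projX d z ⊗ₖ Γ z) := by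
        refine Finset.sum_congr rfl fun z _ => ?_
        ext ⟨a, b⟩ ⟨c, e⟩
        simp [Matrix.sub_apply, sub_mul]
      rw [h1, Finset.sum_sub_distrib, kron_sum_right, hΓsum, Matrix.one_kronecker_one]
    have hpsd1M : ((1 : Matrix (Fin d × Fin d × β) (Fin d × Fin d × β) ℂ) - M).PosSemidef := by
      rw [hsub]
      exact sum_posSemidef _ _ fun z _ =>
        kron_posSemidef (one_sub_projX_posSemidef z) (hΓpsd z)
    have h0 : 0 ≤ ((1 - M) * psiZ ψ).trace := trace_mul_psd_nonneg hpsd1M hψZ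
    have hexp : ((1 - M) * psiZ ψ).trace = 1 - (M * psiZ ψ).trace := by
      rw [Matrix.sub_mul, Matrix.one_mul, Matrix.trace_sub, htr]
    rw [hexp] at h0
    have h2 := (Complex.le_def.mp h0).1
    simp only [Complex.zero_re, Complex.sub_re, Complex.one_re] at h2
    linarith
  have hne : Set.Nonempty {r | ∃ Λ : Fin d → Matrix β β ℂ, IsPOVM Λ ∧
      r = (Matrix.trace ((∑ z, projX d z ⊗ₖ Λ z) * ψ)).re} := by
    refine ⟨_, fun z => if z = 0 then 1 else 0, ⟨?_, ?_⟩, rfl⟩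
    · intro z; dsimp only; split_ifs
      exacts [Matrix.PosSemidef.one, Matrix.PosSemidef.zero]
    · simp
  rw [ge_iff_le, Pguess, Pguess]
  apply csSup_le_csSup hbdd hne
  rintro r ⟨Λ, ⟨hpsd, hsum⟩, rfl⟩
  refine ⟨fun x => ∑ y, projX d y ⊗ₖ Λ (x + y), ⟨?_, ?_⟩, ?_⟩
  · intro x
    exact sum_posSemidef _ _ fun y _ => kron_posSemidef (projX_posSemidef y) (hpsd _)
  · rw [Finset.sum_comm]
    have h1 : ∀ y : Fin d, ∑ x : Fin d, projX d y ⊗ₖ Λ (x + y) = projX d y ⊗ₖ 1 := by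
      intro y
      rw [kron_sum_right]
      congr 1
      rw [show (∑ x : Fin d, Λ (x + y)) = ∑ x : Fin d, Λ x from
        Fintype.sum_equiv (Equiv.addRight y) _ _ fun x => rfl, hsum]
    rw [Finset.sum_congr rfl fun y _ => h1 y, kron_sum_left, sum_projX,
      Matrix.one_kronecker_one]
  · set g : Fin d → ℂ := fun w => Matrix.trace ((projX d w ⊗ₖ Λ w) * ψ) with hg
    have hL : Matrix.trace ((∑ x, projX d x ⊗ₖ (∑ y, projX d y ⊗ₖ Λ (x + y))) * psiZ ψ)
        = ∑ x, ∑ y, (d : ℂ)⁻¹ * g (x + y) := by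
      rw [Finset.sum_mul, Matrix.trace_sum]
      refine Finset.sum_congr rfl fun x _ => ?_
      rw [← kron_sum_right, Finset.sum_mul, Matrix.trace_sum]
      refine Finset.sum_congr rfl fun y _ => ?_
      rw [key_trace, hadamard_projX, Matrix.smul_kronecker, Matrix.smul_mul,
        Matrix.trace_smul, smul_eq_mul]
    have hR : Matrix.trace ((∑ z, projX d z ⊗ₖ Λ z) * ψ) = ∑ z, g z := by
      rw [Finset.sum_mul, Matrix.trace_sum]
    have hmain : ∑ x : Fin d, ∑ y : Fin d, (d : ℂ)⁻¹ * g (x + y) = ∑ z, g z := by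
      rw [Finset.sum_comm]
      have h1 : ∀ y : Fin d, ∑ x : Fin d, (d : ℂ)⁻¹ * g (x + y) = (d : ℂ)⁻¹ * ∑ z, g z := by
        intro y
        rw [← Finset.mul_sum, sum_shift g y]
      rw [Finset.sum_congr rfl fun y _ => h1 y, Finset.sum_const, Finset.card_univ,
        Fintype.card_fin, nsmul_eq_mul, ← mul_assoc, mul_inv_cancel₀, one_mul]
      exact_mod_cast NeZero.ne d
    rw [hL, hR, hmain]
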